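/- Let Y_1, Y_2, … be mutually independent real-valued random variables, S_k = Y_1 + ⋯ + Y_k. Then for every u > 0 and every h ≥ 0: P[sup_{k≥1} S_k > u] ≤ e^{−hu} · sup_{k≥1} E[e^{h S_k}], and moreover sup_{k≥1} E[e^{h S_k}] = sup_{k≥1} ∏_{j=1}^{k} E[e^{h Y_j}]. -/

import Mathlib

open MeasureTheory ProbabilityTheory
open scoped ENNReal

lemma aux_lintegral_prod {Ω : Type*} [MeasurableSpace Ω] (P : Measure Ω) [IsProbabilityMeasure P]
    (g : ℕ → Ω → ℝ≥0∞) (hgm : ∀ i, Measurable (g i))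
    (hind : iIndepFun g P) (s : Finset ℕ) :
    ∫⁻ ω, ∏ j ∈ s, g j ω ∂P = ∏ j ∈ s, ∫⁻ ω, g j ω ∂P := by
  classical
  induction s using Finset.induction_on with
  | empty => simp
  | @insert a s ha ih =>
    have hind2 : IndepFun (∏ j ∈ s, g j) (g a) P :=
      hind.indepFun_finsetProd_of_notMem hgm ha
    have hmp : Measurable (∏ j ∈ s, g j) := by
      have : (∏ j ∈ s, g j) = fun ω => ∏ j ∈ s, g j ω := by
        funext ω; simp [Finset.prod_apply]
      rw [this]; exact Finset.measurable_prod _ (fun i _ => hgm i)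
    have key := lintegral_mul_eq_lintegral_mul_lintegral_of_indepFun hmp (hgm a) hind2
    have h1 : ∀ ω, ∏ j ∈ insert a s, g j ω = ((∏ j ∈ s, g j) * g a) ω := by
      intro ω; simp [Finset.prod_insert ha, Finset.prod_apply, mul_comm]
    simp_rw [h1]
    rw [key, Finset.prod_insert ha]
    have : ∫⁻ ω, (∏ j ∈ s, g j) ω ∂P = ∏ j ∈ s, ∫⁻ ω, g j ω ∂P := by
      simp_rw [Finset.prod_apply]; exact ih
    rw [this, mul_comm]

/-- Theorem 1, main inequality.
`Y j` stands for `Y_{j+1}` and `S k = Y_1 + ⋯ + Y_k = ∑_{j < k} Y j`.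
For mutually independent `Y_1, Y_2, …`, every `u > 0` and every `h ≥ 0`:
`P[sup_{k≥1} S_k > u] ≤ e^{-h u} · sup_{k≥1} E[e^{h S_k}]`, and moreover
`sup_{k≥1} E[e^{h S_k}] = sup_{k≥1} ∏_{j=1}^{k} E[e^{h Y_j}]`. -/
theorem stmt2 {Ω : Type*} [MeasurableSpace Ω] (P : Measure Ω) [IsProbabilityMeasure P]
    (Y : ℕ → Ω → ℝ)
    (hmeas : ∀ i, Measurable (Y i))
    (hindep : iIndepFun Y P)
    (S : ℕ → Ω → ℝ) (hS : ∀ k ω, S k ω = ∑ j ∈ Finset.range k, Y j ω)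
    (u : ℝ) (hu : 0 < u) (h : ℝ) (hh : 0 ≤ h) :
    P (⋃ k : ℕ, {ω | u < S (k + 1) ω}) ≤
      ENNReal.ofReal (Real.exp (-h * u)) *
        ⨆ k : ℕ, ∫⁻ ω, ENNReal.ofReal (Real.exp (h * S (k + 1) ω)) ∂P ∧
    (⨆ k : ℕ, ∫⁻ ω, ENNReal.ofReal (Real.exp (h * S (k + 1) ω)) ∂P) =
      ⨆ k : ℕ, ∏ j ∈ Finset.range (k + 1),
        ∫⁻ ω, ENNReal.ofReal (Real.exp (h * Y j ω)) ∂P := by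
  classical
  -- the transformed family
  set g : ℕ → Ω → ℝ≥0∞ := fun j ω => ENNReal.ofReal (Real.exp (h * Y j ω)) with hgdef
  have hgm : ∀ j, Measurable (g j) := fun j =>
    ((measurable_const.mul (hmeas j)).exp).ennreal_ofReal
  have hgindep : iIndepFun g P := by
    have := hindep.comp (fun _ (x : ℝ) => ENNReal.ofReal (Real.exp (h * x)))
      (fun _ => ((measurable_const.mul measurable_id).exp).ennreal_ofReal)
    exact this
  have Smeas : ∀ k, Measurable (S k) := by
    intro k
    have : S k = fun ω => ∑ j ∈ Finset.range k, Y j ω := funext (hS k)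
    rw [this]; exact Finset.measurable_sum _ (fun j _ => hmeas j)
  -- pointwise factorization of the exponential
  have hexp : ∀ k ω, ENNReal.ofReal (Real.exp (h * S k ω)) = ∏ j ∈ Finset.range k, g j ω := by
    intro k ω
    rw [hS, Finset.mul_sum, Real.exp_sum,
      ENNReal.ofReal_prod_of_nonneg (fun i _ => (Real.exp_pos _).le)]
  -- the moment generating values
  set b : ℕ → ℝ≥0∞ := fun j => ∫⁻ ω, g j ω ∂P with hbdef
  have hB : ∀ k, ∫⁻ ω, ENNReal.ofReal (Real.exp (h * S k ω)) ∂P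
      = ∏ j ∈ Finset.range k, b j := by
    intro k
    simp_rw [hexp]
    exact aux_lintegral_prod P g hgm hgindep _
  have part2 : (⨆ k : ℕ, ∫⁻ ω, ENNReal.ofReal (Real.exp (h * S (k + 1) ω)) ∂P) =
      ⨆ k : ℕ, ∏ j ∈ Finset.range (k + 1),
        ∫⁻ ω, ENNReal.ofReal (Real.exp (h * Y j ω)) ∂P :=
    iSup_congr fun k => hB (k + 1)
  refine ⟨?_, part2⟩
  -- first-passage events
  set A : ℕ → Set Ω := fun k => {ω | u < S (k + 1) ω ∧ ∀ j < k, S (j + 1) ω ≤ u} with hAdef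
  have hAmeas : ∀ k, MeasurableSet (A k) := by
    intro k
    have : A k = {ω | u < S (k + 1) ω} ∩ ⋂ j ∈ Finset.range k, {ω | S (j + 1) ω ≤ u} := by
      ext ω; simp [hAdef, Set.mem_iInter]
    rw [this]
    exact (measurableSet_lt measurable_const (Smeas _)).inter
      (MeasurableSet.biInter (Finset.range k).countable_toSet
        (fun j _ => measurableSet_le (Smeas _) measurable_const))
  have hAdisj : Pairwise (Function.onFun Disjoint A) := by
    have key : ∀ k l, k < l → Disjoint (A k) (A l) := by
      intro k l hkl
      rw [Set.disjoint_left]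
      rintro ω ⟨hk1, _⟩ ⟨_, hl2⟩
      exact absurd hk1 (not_lt.2 (hl2 k hkl))
    intro k l hkl
    rcases lt_or_gt_of_ne hkl with hlt | hgt
    · exact key k l hlt
    · exact (key l k hgt).symm
  have hAunion : (⋃ k, A k) = ⋃ k : ℕ, {ω | u < S (k + 1) ω} := by
    ext ω
    simp only [Set.mem_iUnion, Set.mem_setOf_eq, hAdef]
    constructor
    · rintro ⟨k, hk1, -⟩; exact ⟨k, hk1⟩
    · rintro ⟨k, hk⟩
      have hex : ∃ n, u < S (n + 1) ω := ⟨k, hk⟩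
      refine ⟨Nat.find hex, Nat.find_spec hex, fun j hj => ?_⟩
      exact not_lt.1 (Nat.find_min hex hj)
  -- the truncated integrals
  set a : ℕ → ℝ≥0∞ := fun k =>
    ∫⁻ ω, (A k).indicator (fun ω => ENNReal.ofReal (Real.exp (h * S (k + 1) ω))) ω ∂P with hadef
  have step1 : ∀ k, P (A k) ≤ ENNReal.ofReal (Real.exp (-h * u)) * a k := by
    intro k
    have h2 : ENNReal.ofReal (Real.exp (h * u)) * P (A k) ≤ a k := by
      rw [← lintegral_indicator_const (hAmeas k)]
      refine lintegral_mono fun ω => ?_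
      by_cases hω : ω ∈ A k
      · rw [Set.indicator_of_mem hω, Set.indicator_of_mem hω]
        exact ENNReal.ofReal_le_ofReal (Real.exp_le_exp.2
          (mul_le_mul_of_nonneg_left hω.1.le hh))
      · rw [Set.indicator_of_notMem hω, Set.indicator_of_notMem hω]
    have hone : ENNReal.ofReal (Real.exp (-h * u)) * ENNReal.ofReal (Real.exp (h * u)) = 1 := by
      rw [← ENNReal.ofReal_mul (Real.exp_pos _).le, ← Real.exp_add]
      simp
    calc P (A k) = ENNReal.ofReal (Real.exp (-h * u)) *
        (ENNReal.ofReal (Real.exp (h * u)) * P (A k)) := by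
          rw [← mul_assoc, hone, one_mul]
      _ ≤ ENNReal.ofReal (Real.exp (-h * u)) * a k := mul_le_mul_right h2 _
  -- key independence identity
  have key_indep : ∀ m k, k ≤ m →
      ∫⁻ ω, ((A k).indicator (fun ω => ENNReal.ofReal (Real.exp (h * S (k + 1) ω))) ω)
          * ∏ j ∈ Finset.Ico (k + 1) (m + 1), g j ω ∂P
        = a k * ∏ j ∈ Finset.Ico (k + 1) (m + 1), b j := by
    intro m k _
    set s1 : Finset ℕ := Finset.range (k + 1) with hs1
    set s2 : Finset ℕ := Finset.Ico (k + 1) (m + 1) with hs2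
    have hdisj : Disjoint s1 s2 := by
      rw [Finset.disjoint_left]
      intro x hx1 hx2
      rw [hs1, Finset.mem_range] at hx1
      rw [hs2, Finset.mem_Ico] at hx2
      omega
    have base := hindep.indepFun_finset s1 s2 hdisj hmeas
    -- the function of the first block
    set w : ((i : s1) → ℝ) → ℕ → ℝ := fun v i => if hi : i ∈ s1 then v ⟨i, hi⟩ else 0 with hwdef
    have hwm : ∀ i, Measurable fun v : (i : s1) → ℝ => w v i := by
      intro i
      by_cases hi : i ∈ s1
      · simp only [hwdef, dif_pos hi]; exact measurable_pi_apply _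
      · simp only [hwdef, dif_neg hi]; exact measurable_const
    set T : ((i : s1) → ℝ) → ℕ → ℝ := fun v n => ∑ j ∈ Finset.range n, w v j with hTdef
    have hTm : ∀ n, Measurable fun v => T v n :=
      fun n => Finset.measurable_sum _ (fun j _ => hwm j)
    set C : Set ((i : s1) → ℝ) := {v | u < T v (k + 1) ∧ ∀ j < k, T v (j + 1) ≤ u} with hCdef
    have hCm : MeasurableSet C := by
      have : C = {v | u < T v (k + 1)} ∩ ⋂ j ∈ Finset.range k, {v | T v (j + 1) ≤ u} := by
        ext v; simp [hCdef, Set.mem_iInter]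
      rw [this]
      exact (measurableSet_lt measurable_const (hTm _)).inter
        (MeasurableSet.biInter (Finset.range k).countable_toSet
          (fun j _ => measurableSet_le (hTm _) measurable_const))
    set φ : ((i : s1) → ℝ) → ℝ≥0∞ :=
      C.indicator (fun v => ENNReal.ofReal (Real.exp (h * T v (k + 1)))) with hφdef
    have hφm : Measurable φ :=
      Measurable.indicator ((measurable_const.mul (hTm _)).exp.ennreal_ofReal) hCm
    set ψ : ((i : s2) → ℝ) → ℝ≥0∞ :=
      fun v => ∏ i : s2, ENNReal.ofReal (Real.exp (h * v i)) with hψdef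
    have hψm : Measurable ψ :=
      Finset.measurable_prod _
        (fun i _ => ((measurable_const.mul (measurable_pi_apply i)).exp.ennreal_ofReal))
    have hFG0 := base.comp hφm hψm
    have hT : ∀ (ω : Ω), ∀ n ≤ k + 1, T (fun i : s1 => Y i ω) n = S n ω := by
      intro ω n hn
      rw [hTdef, hS]
      refine Finset.sum_congr rfl fun j hj => ?_
      have hj1 : j ∈ s1 := by
        rw [hs1, Finset.mem_range]
        exact lt_of_lt_of_le (Finset.mem_range.1 hj) hn
      simp [hwdef, dif_pos hj1]
    have hφY : (φ ∘ fun ω (i : s1) => Y i ω) =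
        fun ω => (A k).indicator (fun ω => ENNReal.ofReal (Real.exp (h * S (k + 1) ω))) ω := by
      funext ω
      have hmemiff : (fun i : s1 => Y i ω) ∈ C ↔ ω ∈ A k := by
        simp only [hCdef, hAdef, Set.mem_setOf_eq]
        rw [hT ω (k + 1) le_rfl]
        constructor
        · rintro ⟨h1, h2⟩
          refine ⟨h1, fun j hj => ?_⟩
          have := h2 j hj
          rwa [hT ω (j + 1) (by omega)] at this
        · rintro ⟨h1, h2⟩
          refine ⟨h1, fun j hj => ?_⟩
          rw [hT ω (j + 1) (by omega)]
          exact h2 j hj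
      by_cases hω : ω ∈ A k
      · simp only [Function.comp_apply, hφdef]
        rw [Set.indicator_of_mem (hmemiff.2 hω), Set.indicator_of_mem hω, hT ω (k + 1) le_rfl]
      · simp only [Function.comp_apply, hφdef]
        rw [Set.indicator_of_notMem (fun hc => hω (hmemiff.1 hc)), Set.indicator_of_notMem hω]
    have hψY : (ψ ∘ fun ω (i : s2) => Y i ω) = fun ω => ∏ j ∈ s2, g j ω := by
      funext ω
      simp only [Function.comp_apply, hψdef]
      exact Finset.prod_coe_sort s2 (fun j => g j ω)
    rw [hφY, hψY] at hFG0
    have hFmeas : Measurable fun ω =>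
        (A k).indicator (fun ω => ENNReal.ofReal (Real.exp (h * S (k + 1) ω))) ω :=
      Measurable.indicator ((measurable_const.mul (Smeas _)).exp.ennreal_ofReal) (hAmeas k)
    have hGmeas : Measurable fun ω => ∏ j ∈ s2, g j ω :=
      Finset.measurable_prod _ (fun j _ => hgm j)
    have hmul := lintegral_mul_eq_lintegral_mul_lintegral_of_indepFun hFmeas hGmeas hFG0
    have hGint : ∫⁻ ω, ∏ j ∈ s2, g j ω ∂P = ∏ j ∈ s2, b j :=
      aux_lintegral_prod P g hgm hgindep s2
    calc ∫⁻ ω, ((A k).indicator (fun ω => ENNReal.ofReal (Real.exp (h * S (k + 1) ω))) ω)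
          * ∏ j ∈ s2, g j ω ∂P
        = ∫⁻ ω, ((fun ω => (A k).indicator
            (fun ω => ENNReal.ofReal (Real.exp (h * S (k + 1) ω))) ω)
            * fun ω => ∏ j ∈ s2, g j ω) ω ∂P := by rfl
      _ = a k * ∏ j ∈ s2, b j := by rw [hmul, hGint, hadef]
  -- pointwise: each summand equals the indicator of the full exponential
  have hterm : ∀ m k, k ≤ m → ∀ ω : Ω,
      ((A k).indicator (fun ω => ENNReal.ofReal (Real.exp (h * S (k + 1) ω))) ω)
          * ∏ j ∈ Finset.Ico (k + 1) (m + 1), g j ω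
        = (A k).indicator (fun ω => ENNReal.ofReal (Real.exp (h * S (m + 1) ω))) ω := by
    intro m k hkm ω
    by_cases hω : ω ∈ A k
    · rw [Set.indicator_of_mem hω, Set.indicator_of_mem hω, hexp, hexp,
        Finset.range_eq_Ico, Finset.range_eq_Ico]
      exact Finset.prod_Ico_consecutive _ (Nat.zero_le _) (by omega)
    · simp [Set.indicator_of_notMem hω]
  have hpoint : ∀ m (ω : Ω), ∑ k ∈ Finset.range (m + 1),
      ((A k).indicator (fun ω => ENNReal.ofReal (Real.exp (h * S (k + 1) ω))) ω)
          * ∏ j ∈ Finset.Ico (k + 1) (m + 1), g j ω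
        ≤ ENNReal.ofReal (Real.exp (h * S (m + 1) ω)) := by
    intro m ω
    have hrw : ∀ k ∈ Finset.range (m + 1),
        ((A k).indicator (fun ω => ENNReal.ofReal (Real.exp (h * S (k + 1) ω))) ω)
          * ∏ j ∈ Finset.Ico (k + 1) (m + 1), g j ω
        = (A k).indicator (fun ω => ENNReal.ofReal (Real.exp (h * S (m + 1) ω))) ω := by
      intro k hk
      exact hterm m k (by rw [Finset.mem_range] at hk; omega) ω
    rw [Finset.sum_congr rfl hrw]
    by_cases hex : ∃ k0 ∈ Finset.range (m + 1), ω ∈ A k0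
    · obtain ⟨k0, hk0m, hk0⟩ := hex
      rw [Finset.sum_eq_single k0]
      · rw [Set.indicator_of_mem hk0]
      · intro j hj hne
        have hdisj : Disjoint (A j) (A k0) := hAdisj hne
        exact Set.indicator_of_notMem (fun hc => (Set.disjoint_left.1 hdisj hc) hk0) _
      · intro hc; exact absurd hk0m hc
    · push_neg at hex
      rw [Finset.sum_eq_zero (fun k hk => Set.indicator_of_notMem (hex k hk) _)]
      exact zero_le
  -- summing the key identity
  have hsum_le : ∀ m, ∑ k ∈ Finset.range (m + 1), a k * ∏ j ∈ Finset.Ico (k + 1) (m + 1), b j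
      ≤ ∏ j ∈ Finset.range (m + 1), b j := by
    intro m
    have hmeas_term : ∀ k, Measurable fun ω =>
        ((A k).indicator (fun ω => ENNReal.ofReal (Real.exp (h * S (k + 1) ω))) ω)
          * ∏ j ∈ Finset.Ico (k + 1) (m + 1), g j ω :=
      fun k => (Measurable.indicator ((measurable_const.mul (Smeas _)).exp.ennreal_ofReal)
        (hAmeas k)).mul (Finset.measurable_prod _ (fun j _ => hgm j))
    calc ∑ k ∈ Finset.range (m + 1), a k * ∏ j ∈ Finset.Ico (k + 1) (m + 1), b j
        = ∑ k ∈ Finset.range (m + 1), ∫⁻ ω,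
            ((A k).indicator (fun ω => ENNReal.ofReal (Real.exp (h * S (k + 1) ω))) ω)
              * ∏ j ∈ Finset.Ico (k + 1) (m + 1), g j ω ∂P := by
          refine Finset.sum_congr rfl fun k hk => ?_
          exact (key_indep m k (by rw [Finset.mem_range] at hk; omega)).symm
      _ = ∫⁻ ω, ∑ k ∈ Finset.range (m + 1),
            ((A k).indicator (fun ω => ENNReal.ofReal (Real.exp (h * S (k + 1) ω))) ω)
              * ∏ j ∈ Finset.Ico (k + 1) (m + 1), g j ω ∂P :=
          (lintegral_finset_sum _ (fun k _ => hmeas_term k)).symm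
      _ ≤ ∫⁻ ω, ENNReal.ofReal (Real.exp (h * S (m + 1) ω)) ∂P :=
          lintegral_mono (hpoint m)
      _ = ∏ j ∈ Finset.range (m + 1), b j := hB (m + 1)
  -- conclusion
  set M := ⨆ k : ℕ, ∫⁻ ω, ENNReal.ofReal (Real.exp (h * S (k + 1) ω)) ∂P with hMdef
  by_cases hMtop : M = ∞
  · rw [hMtop, ENNReal.mul_top (ENNReal.ofReal_pos.2 (Real.exp_pos _)).ne']
    exact le_top
  · have hBfin : ∀ k, (∏ j ∈ Finset.range (k + 1), b j) ≠ ∞ := by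
      intro k
      rw [← hB (k + 1)]
      exact ((le_iSup (fun k => ∫⁻ ω, ENNReal.ofReal (Real.exp (h * S (k + 1) ω)) ∂P) k).trans_lt
        (lt_top_iff_ne_top.2 hMtop)).ne
    have hBpos : ∀ k, 0 < ∏ j ∈ Finset.range (k + 1), b j := by
      intro k
      rw [← hB (k + 1),
        lintegral_pos_iff_support (f := fun ω => ENNReal.ofReal (Real.exp (h * S (k + 1) ω)))
          ((measurable_const.mul (Smeas _)).exp.ennreal_ofReal)]
      have hsupp : Function.support (fun ω => ENNReal.ofReal (Real.exp (h * S (k + 1) ω)))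
          = Set.univ := by
        ext ω
        simp [Function.support, (ENNReal.ofReal_pos.2 (Real.exp_pos _)).ne']
      rw [hsupp, measure_univ]
      exact zero_lt_one
    have key2 : ∀ m, ∑ k ∈ Finset.range (m + 1), a k / ∏ j ∈ Finset.range (k + 1), b j ≤ 1 := by
      intro m
      have h1 : (∑ k ∈ Finset.range (m + 1), a k / ∏ j ∈ Finset.range (k + 1), b j) *
          (∏ j ∈ Finset.range (m + 1), b j) ≤ 1 * ∏ j ∈ Finset.range (m + 1), b j := by
        rw [one_mul, Finset.sum_mul]
        refine le_trans (le_of_eq (Finset.sum_congr rfl fun k hk => ?_)) (hsum_le m)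
        have hkm : k + 1 ≤ m + 1 := by rw [Finset.mem_range] at hk; omega
        have hsplit : (∏ j ∈ Finset.range (k + 1), b j) * ∏ j ∈ Finset.Ico (k + 1) (m + 1), b j
            = ∏ j ∈ Finset.range (m + 1), b j := by
          rw [Finset.range_eq_Ico, Finset.range_eq_Ico]
          exact Finset.prod_Ico_consecutive _ (Nat.zero_le _) hkm
        rw [← hsplit, ← mul_assoc, ENNReal.div_mul_cancel (hBpos k).ne' (hBfin k)]
      exact (ENNReal.mul_le_mul_iff_left (hBpos m).ne' (hBfin m)).1 h1
    have hBleM : ∀ k, (∏ j ∈ Finset.range (k + 1), b j) ≤ M := by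
      intro k
      rw [← hB (k + 1)]
      exact le_iSup (fun k => ∫⁻ ω, ENNReal.ofReal (Real.exp (h * S (k + 1) ω)) ∂P) k
    have key3 : ∀ m, ∑ k ∈ Finset.range (m + 1), a k ≤ M := by
      intro m
      calc ∑ k ∈ Finset.range (m + 1), a k
          = ∑ k ∈ Finset.range (m + 1),
              a k / (∏ j ∈ Finset.range (k + 1), b j) * ∏ j ∈ Finset.range (k + 1), b j :=
            Finset.sum_congr rfl fun k _ =>
              (ENNReal.div_mul_cancel (hBpos k).ne' (hBfin k)).symm
        _ ≤ ∑ k ∈ Finset.range (m + 1), a k / (∏ j ∈ Finset.range (k + 1), b j) * M :=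
            Finset.sum_le_sum fun k _ => mul_le_mul_right (hBleM k) _
        _ = (∑ k ∈ Finset.range (m + 1), a k / ∏ j ∈ Finset.range (k + 1), b j) * M :=
            (Finset.sum_mul _ _ _).symm
        _ ≤ 1 * M := mul_le_mul_left (key2 m) M
        _ = M := one_mul M
    have key4 : ∑' k, a k ≤ M := by
      rw [ENNReal.tsum_eq_iSup_nat]
      refine iSup_le fun n => ?_
      cases n with
      | zero => simp
      | succ m => exact key3 m
    calc P (⋃ k : ℕ, {ω | u < S (k + 1) ω}) = P (⋃ k, A k) := by rw [hAunion]
      _ = ∑' k, P (A k) := measure_iUnion hAdisj hAmeas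
      _ ≤ ∑' k, ENNReal.ofReal (Real.exp (-h * u)) * a k := ENNReal.tsum_le_tsum step1
      _ = ENNReal.ofReal (Real.exp (-h * u)) * ∑' k, a k := ENNReal.tsum_mul_left
      _ ≤ ENNReal.ofReal (Real.exp (-h * u)) * M := mul_le_mul_right key4 _
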